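/- For x > 0, ln x - 1/(2x) - ψ(x) = ∫_0^∞ e^{-xt} (1/2 + 1/(e^t - 1) - 1/t) dt, where ψ is the digamma function. -/

import Mathlib

open Real MeasureTheory

/-- The digamma function `ψ(x) = Γ'(x)/Γ(x) = d(log Γ)/dx`. -/
noncomputable def digamma (x : ℝ) : ℝ := deriv (fun y : ℝ => Real.log (Real.Gamma y)) x

section BinetAux

open Set Filter Topology

noncomputable def binetPhi (t : ℝ) : ℝ := 1 / 2 + 1 / (Real.exp t - 1) - 1 / t

lemma binet_aux_ineq {t : ℝ} (ht : 0 ≤ t) : 2 * (Real.exp t - 1) ≤ t * (Real.exp t + 1) := by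
  -- u t = t*(e^t+1) - 2*(e^t-1), u 0 = 0, u' = (t-1)e^t+1, u'' = t e^t ≥ 0
  set u : ℝ → ℝ := fun t => t * (Real.exp t + 1) - 2 * (Real.exp t - 1) with hu
  have hderiv : ∀ s, HasDerivAt u ((s - 1) * Real.exp s + 1) s := by
    intro s
    have h1 : HasDerivAt (fun s : ℝ => s * (Real.exp s + 1)) (1 * (Real.exp s + 1) + s * Real.exp s) s :=
      (hasDerivAt_id s).mul ((Real.hasDerivAt_exp s).add_const 1)
    have h2 : HasDerivAt (fun s : ℝ => 2 * (Real.exp s - 1)) (2 * Real.exp s) s :=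
      ((Real.hasDerivAt_exp s).sub_const 1).const_mul 2
    exact (h1.sub h2).congr_deriv (by ring)
  have hv : ∀ s, 0 ≤ s → 0 ≤ (s - 1) * Real.exp s + 1 := by
    intro s hs
    set v : ℝ → ℝ := fun s => (s - 1) * Real.exp s + 1 with hvdef
    have hvd : ∀ r, HasDerivAt v (r * Real.exp r) r := by
      intro r
      have h1 : HasDerivAt (fun r : ℝ => (r - 1) * Real.exp r)
          (1 * Real.exp r + (r - 1) * Real.exp r) r :=
        ((hasDerivAt_id r).sub_const 1).mul (Real.hasDerivAt_exp r)
      have := h1.add_const 1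
      exact this.congr_deriv (by ring)
    have hmono : MonotoneOn v (Ici (0:ℝ)) := by
      refine monotoneOn_of_deriv_nonneg (convex_Ici 0) ?_ ?_ ?_
      · exact Continuous.continuousOn (by continuity)
      · intro r hr; exact (hvd r).differentiableAt.differentiableWithinAt
      · intro r hr
        rw [(hvd r).deriv]
        have : 0 < r := by simpa using hr
        positivity
    have h0 : v 0 = 0 := by simp [hvdef]
    have := hmono (self_mem_Ici) (by exact hs) hs
    simpa [h0] using this
  have hmono : MonotoneOn u (Ici (0:ℝ)) := by
    refine monotoneOn_of_deriv_nonneg (convex_Ici 0) ?_ ?_ ?_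
    · exact Continuous.continuousOn (by continuity)
    · intro r hr; exact (hderiv r).differentiableAt.differentiableWithinAt
    · intro r hr
      rw [(hderiv r).deriv]
      exact hv r (le_of_lt (by simpa using hr))
  have h0 : u 0 = 0 := by simp [hu]
  have := hmono self_mem_Ici (by exact ht) ht
  rw [h0] at this
  simp only [hu] at this
  linarith

lemma binetPhi_nonneg {t : ℝ} (ht : 0 < t) : 0 ≤ binetPhi t := by
  have he : (0:ℝ) < Real.exp t - 1 := by
    have := Real.exp_lt_exp.2 ht; simp only [Real.exp_zero] at this; linarith
  have key := binet_aux_ineq ht.le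
  rw [binetPhi]
  rw [div_add_div _ _ (two_ne_zero) he.ne', sub_nonneg, div_le_div_iff₀ ht (by positivity)]
  nlinarith

lemma binetPhi_le_half {t : ℝ} (ht : 0 < t) : binetPhi t ≤ 1 / 2 := by
  have he : (0:ℝ) < Real.exp t - 1 := by
    have := Real.exp_lt_exp.2 ht; simp only [Real.exp_zero] at this; linarith
  have h1 : t ≤ Real.exp t - 1 := by linarith [Real.add_one_le_exp t]
  have := one_div_le_one_div_of_le ht h1
  rw [binetPhi]; linarith

lemma binet_integral_exp {c : ℝ} (hc : 0 < c) :
    ∫ t in Ioi (0:ℝ), Real.exp (-(c * t)) = 1 / c := by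
  have := Real.integral_rpow_mul_exp_neg_mul_Ioi (a := 1) one_pos hc
  simpa using this

lemma binet_integrableOn_exp_phi {x : ℝ} (hx : 0 < x) :
    IntegrableOn (fun t : ℝ => Real.exp (-x * t) * binetPhi t) (Ioi (0:ℝ)) := by
  refine Integrable.mono' ((exp_neg_integrableOn_Ioi 0 hx).mul_const (1/2)) ?_ ?_
  · refine AEStronglyMeasurable.mul ?_ ?_
    · exact (Real.continuous_exp.comp (continuous_const.mul continuous_id)).aestronglyMeasurable
    · exact (by unfold binetPhi; fun_prop : Measurable binetPhi).aestronglyMeasurable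
  · rw [ae_restrict_iff' measurableSet_Ioi]
    filter_upwards with t ht
    rw [Real.norm_eq_abs, abs_mul, abs_of_nonneg (Real.exp_pos _).le,
      abs_of_nonneg (binetPhi_nonneg ht)]
    exact mul_le_mul_of_nonneg_left (binetPhi_le_half ht) (Real.exp_pos _).le

lemma binet_inner (t : ℝ) (ht : 0 < t) (a b : ℝ) :
    ∫ s in a..b, Real.exp (-(s * t)) = (Real.exp (-(a * t)) - Real.exp (-(b * t))) / t := by
  have key : ∀ s : ℝ, HasDerivAt (fun s : ℝ => -Real.exp (-(s * t)) / t) (Real.exp (-(s * t))) s := by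
    intro s
    have h1 : HasDerivAt (fun s : ℝ => -(s * t)) (-t) s := by
      exact (hasDerivAt_mul_const t).neg
    have h2 := (h1.exp).neg.div_const t
    exact h2.congr_deriv (by field_simp)
  rw [intervalIntegral.integral_eq_sub_of_hasDerivAt (fun s _ => key s)
    ((Real.continuous_exp.comp (by continuity)).intervalIntegrable a b)]
  ring

lemma binet_frullani {a b : ℝ} (ha : 0 < a) (hab : a ≤ b) :
    ∫ t in Ioi (0:ℝ), (Real.exp (-(a * t)) - Real.exp (-(b * t))) / t
      = Real.log b - Real.log a := by
  have hb : 0 < b := lt_of_lt_of_le ha hab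
  have hmeas : AEStronglyMeasurable (Function.uncurry fun (t s : ℝ) => Real.exp (-(s * t)))
      ((volume.restrict (Ioi (0:ℝ))).prod (volume.restrict (Ioc a b))) := by
    exact (Real.continuous_exp.comp (by continuity)).aestronglyMeasurable
  have hint : Integrable (Function.uncurry fun (t s : ℝ) => Real.exp (-(s * t)))
      ((volume.restrict (Ioi (0:ℝ))).prod (volume.restrict (Ioc a b))) := by
    rw [integrable_prod_iff hmeas]
    constructor
    · rw [ae_restrict_iff' measurableSet_Ioi]
      filter_upwards with t ht
      exact (Real.continuous_exp.comp (by continuity)).integrableOn_Ioc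
    · refine Integrable.mono' (g := fun t => (b - a) * Real.exp (-(a * t))) ?_ ?_ ?_
      · exact (((exp_neg_integrableOn_Ioi 0 ha).congr_fun
          (fun t _ => by rw [neg_mul]) measurableSet_Ioi).const_mul (b - a))
      · exact hmeas.norm.integral_prod_right'
      · rw [ae_restrict_iff' measurableSet_Ioi]
        filter_upwards with t ht
        rw [Real.norm_eq_abs, abs_of_nonneg (integral_nonneg (fun s => by positivity))]
        calc ∫ s in Ioc a b, ‖Real.exp (-(s * t))‖
            ≤ ∫ _ in Ioc a b, Real.exp (-(a * t)) := by
              refine setIntegral_mono_on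
                ((Real.continuous_exp.comp (by continuity)).norm).integrableOn_Ioc
                (integrableOn_const measure_Ioc_lt_top.ne)
                measurableSet_Ioc (fun s hs => ?_)
              rw [Real.norm_eq_abs, abs_of_nonneg (Real.exp_pos _).le]
              exact Real.exp_le_exp.2 (by nlinarith [hs.1, (mem_Ioi.mp ht)])
          _ = (b - a) * Real.exp (-(a * t)) := by
              rw [setIntegral_const, Real.volume_real_Ioc_of_le hab, smul_eq_mul]
  have swap := MeasureTheory.integral_integral_swap hint
  calc ∫ t in Ioi (0:ℝ), (Real.exp (-(a * t)) - Real.exp (-(b * t))) / t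
      = ∫ t in Ioi (0:ℝ), ∫ s in Ioc a b, Real.exp (-(s * t)) := by
        refine setIntegral_congr_fun measurableSet_Ioi (fun t ht => ?_)
        rw [← intervalIntegral.integral_of_le hab, binet_inner t ht]
    _ = ∫ s in Ioc a b, ∫ t in Ioi (0:ℝ), Real.exp (-(s * t)) := swap
    _ = ∫ s in Ioc a b, 1 / s := by
        refine setIntegral_congr_fun measurableSet_Ioc (fun s hs => ?_)
        exact binet_integral_exp (lt_of_lt_of_le ha hs.1.le)
    _ = Real.log b - Real.log a := by
        rw [← intervalIntegral.integral_of_le hab, integral_one_div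
          (fun h => by rw [Set.mem_uIcc] at h; rcases h with ⟨h1,_⟩|⟨_,h2⟩ <;> linarith),
          Real.log_div hb.ne' ha.ne']

noncomputable def binetF (x : ℝ) : ℝ := ∫ t in Ioi (0:ℝ), Real.exp (-x * t) * binetPhi t

lemma binet_pointwise {x t : ℝ} (ht : 0 < t) :
    Real.exp (-x * t) * binetPhi t - Real.exp (-(x+1) * t) * binetPhi t
      = (Real.exp (-(x * t)) / 2 + Real.exp (-((x+1) * t)) / 2)
        - (Real.exp (-(x * t)) - Real.exp (-((x+1) * t))) / t := by
  have hv1 : Real.exp t ≠ 1 := by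
    have := Real.exp_lt_exp.2 ht
    rw [Real.exp_zero] at this
    linarith
  have key : Real.exp (-((x+1) * t)) = Real.exp (-(x * t)) * (Real.exp t)⁻¹ := by
    rw [← Real.exp_neg, ← Real.exp_add]; ring_nf
  have h2 : Real.exp (-(x+1) * t) = Real.exp (-((x+1) * t)) := by ring_nf
  have h3 : Real.exp (-x * t) = Real.exp (-(x * t)) := by ring_nf
  rw [h2, h3, key, binetPhi]
  have he : Real.exp t - 1 ≠ 0 := sub_ne_zero.2 hv1
  have hep : Real.exp t ≠ 0 := (Real.exp_pos t).ne'
  field_simp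
  ring

lemma binet_integrableOn_frullani {x : ℝ} (hx : 0 < x) :
    IntegrableOn (fun t : ℝ => (Real.exp (-(x * t)) - Real.exp (-((x+1) * t))) / t)
      (Ioi (0:ℝ)) := by
  refine Integrable.mono' ((exp_neg_integrableOn_Ioi 0 hx).congr_fun
      (fun t _ => by beta_reduce; rw [neg_mul]) measurableSet_Ioi) ?_ ?_
  · refine Measurable.aestronglyMeasurable (Measurable.div ?_ measurable_id)
    exact ((Real.continuous_exp.comp (by continuity)).sub
      (Real.continuous_exp.comp (by continuity))).measurable
  · rw [ae_restrict_iff' measurableSet_Ioi]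
    filter_upwards with t ht
    rw [mem_Ioi] at ht
    have h1 : Real.exp (-((x+1) * t)) ≤ Real.exp (-(x * t)) := by
      apply Real.exp_le_exp.2; nlinarith
    rw [Real.norm_eq_abs, abs_of_nonneg (div_nonneg (by linarith) ht.le)]
    rw [div_le_iff₀ ht]
    have key : Real.exp (-((x+1)*t)) = Real.exp (-(x*t)) * Real.exp (-t) := by
      rw [← Real.exp_add]; ring_nf
    have h2 : 1 - Real.exp (-t) ≤ t := by
      have := Real.add_one_le_exp (-t); linarith
    calc Real.exp (-(x * t)) - Real.exp (-((x+1) * t))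
        = Real.exp (-(x * t)) * (1 - Real.exp (-t)) := by rw [key]; ring
      _ ≤ Real.exp (-(x * t)) * t := by
          exact mul_le_mul_of_nonneg_left h2 (Real.exp_pos _).le

lemma binetF_rec {x : ℝ} (hx : 0 < x) :
    binetF x - binetF (x+1) =
      1 / (2 * x) + 1 / (2 * (x+1)) - (Real.log (x+1) - Real.log x) := by
  have hx1 : (0:ℝ) < x + 1 := by linarith
  have i1 : IntegrableOn (fun t : ℝ => Real.exp (-(x * t)) / 2) (Ioi (0:ℝ)) :=
    ((exp_neg_integrableOn_Ioi 0 hx).congr_fun (fun t _ => by rw [neg_mul])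
      measurableSet_Ioi).div_const 2
  have i2 : IntegrableOn (fun t : ℝ => Real.exp (-((x+1) * t)) / 2) (Ioi (0:ℝ)) :=
    ((exp_neg_integrableOn_Ioi 0 hx1).congr_fun (fun t _ => by rw [neg_mul])
      measurableSet_Ioi).div_const 2
  have i3 := binet_integrableOn_frullani hx
  have e1 : ∫ t in Ioi (0:ℝ), Real.exp (-(x * t)) / 2 = 1 / (2 * x) := by
    rw [integral_div, binet_integral_exp hx]; ring
  have e2 : ∫ t in Ioi (0:ℝ), Real.exp (-((x+1) * t)) / 2 = 1 / (2 * (x+1)) := by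
    rw [integral_div, binet_integral_exp hx1]
    field_simp
  have e3 := binet_frullani hx (by linarith : x ≤ x + 1)
  calc binetF x - binetF (x+1)
      = ∫ t in Ioi (0:ℝ), (Real.exp (-x * t) * binetPhi t
          - Real.exp (-(x+1) * t) * binetPhi t) := by
        rw [binetF, binetF, integral_sub (binet_integrableOn_exp_phi hx)
          (binet_integrableOn_exp_phi hx1)]
    _ = ∫ t in Ioi (0:ℝ), ((Real.exp (-(x * t)) / 2 + Real.exp (-((x+1) * t)) / 2)
          - (Real.exp (-(x * t)) - Real.exp (-((x+1) * t))) / t) := by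
        exact setIntegral_congr_fun measurableSet_Ioi (fun t ht => binet_pointwise ht)
    _ = 1 / (2 * x) + 1 / (2 * (x+1)) - (Real.log (x+1) - Real.log x) := by
        have := integral_sub (i1.add i2) i3
        simp only [Pi.add_apply] at this
        rw [this, integral_add i1 i2, e1, e2, e3]

lemma binet_logGamma_eq : (fun y : ℝ => Real.log (Real.Gamma y)) = Real.log ∘ Real.Gamma := rfl

lemma binet_diff_logGamma {x : ℝ} (hx : 0 < x) :
    DifferentiableAt ℝ (Real.log ∘ Real.Gamma) x := by
  refine ((Real.differentiableAt_Gamma ?_).log (Real.Gamma_ne_zero ?_)) <;>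
    exact fun m => ne_of_gt (by push_cast; linarith [Nat.cast_nonneg (α := ℝ) m])

lemma digamma_rec {x : ℝ} (hx : 0 < x) : digamma (x + 1) = digamma x + 1 / x := by
  rw [digamma, digamma, binet_logGamma_eq]
  have h_rec : ∀ y : ℝ, 0 < y → (Real.log ∘ Real.Gamma) (y + 1)
      = (Real.log ∘ Real.Gamma) y + Real.log y := by
    intro y hy
    simp only [Function.comp_apply, Real.Gamma_add_one hy.ne',
      Real.log_mul hy.ne' (Real.Gamma_pos_of_pos hy).ne', add_comm]
  rw [← deriv_comp_add_const, one_div, ← Real.deriv_log,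
    ← deriv_add (binet_diff_logGamma hx) (Real.differentiableAt_log hx.ne')]
  apply Filter.EventuallyEq.deriv_eq
  filter_upwards [eventually_gt_nhds hx] using h_rec

lemma digamma_le_log {x : ℝ} (hx : 0 < x) : digamma x ≤ Real.log x := by
  have hc := Real.convexOn_log_Gamma
  have h := hc.deriv_le_slope (mem_Ioi.2 hx) (mem_Ioi.2 (by linarith : (0:ℝ) < x + 1))
    (by linarith) (binet_diff_logGamma hx)
  rw [slope_def_field] at h
  have : (Real.log ∘ Real.Gamma) (x + 1) = (Real.log ∘ Real.Gamma) x + Real.log x := by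
    simp only [Function.comp_apply, Real.Gamma_add_one hx.ne',
      Real.log_mul hx.ne' (Real.Gamma_pos_of_pos hx).ne', add_comm]
  rw [digamma, binet_logGamma_eq]
  calc deriv (Real.log ∘ Real.Gamma) x
      ≤ ((Real.log ∘ Real.Gamma) (x + 1) - (Real.log ∘ Real.Gamma) x) / (x + 1 - x) := h
    _ = Real.log x := by rw [this]; simp

lemma log_le_digamma {x : ℝ} (hx : 1 < x) : Real.log (x - 1) ≤ digamma x := by
  have hx0 : (0:ℝ) < x - 1 := by linarith
  have hc := Real.convexOn_log_Gamma
  have h := hc.slope_le_deriv (mem_Ioi.2 hx0) (mem_Ioi.2 (by linarith : (0:ℝ) < x))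
    (by linarith) (binet_diff_logGamma (by linarith))
  rw [slope_def_field] at h
  have : (Real.log ∘ Real.Gamma) x = (Real.log ∘ Real.Gamma) (x - 1) + Real.log (x - 1) := by
    have := Real.Gamma_add_one hx0.ne'
    rw [sub_add_cancel] at this
    simp only [Function.comp_apply, this,
      Real.log_mul hx0.ne' (Real.Gamma_pos_of_pos hx0).ne', add_comm]
  rw [digamma, binet_logGamma_eq]
  refine le_trans (le_of_eq ?_) h
  rw [this]; field_simp; ring

lemma binetF_nonneg {x : ℝ} (hx : 0 < x) : 0 ≤ binetF x := by
  refine setIntegral_nonneg measurableSet_Ioi (fun t ht => ?_)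
  exact mul_nonneg (Real.exp_pos _).le (binetPhi_nonneg ht)

lemma binetF_le {x : ℝ} (hx : 0 < x) : binetF x ≤ 1 / (2 * x) := by
  have i1 : IntegrableOn (fun t : ℝ => Real.exp (-(x * t)) * (1/2)) (Ioi (0:ℝ)) :=
    (exp_neg_integrableOn_Ioi 0 hx).congr_fun (fun t _ => by rw [neg_mul])
      measurableSet_Ioi |>.mul_const (1/2)
  calc binetF x ≤ ∫ t in Ioi (0:ℝ), Real.exp (-(x * t)) * (1/2) := by
        refine setIntegral_mono_on (binet_integrableOn_exp_phi hx) i1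
          measurableSet_Ioi (fun t ht => ?_)
        rw [neg_mul]
        exact mul_le_mul_of_nonneg_left (binetPhi_le_half ht) (Real.exp_pos _).le
    _ = 1 / (2 * x) := by rw [integral_mul_const, binet_integral_exp hx]; ring

noncomputable def binetG (x : ℝ) : ℝ := Real.log x - 1 / (2 * x) - digamma x

lemma binetG_rec {x : ℝ} (hx : 0 < x) : binetG x - binetG (x+1) = binetF x - binetF (x+1) := by
  rw [binetF_rec hx, binetG, binetG, digamma_rec hx]
  have h1 : x + 1 ≠ 0 := by positivity
  field_simp
  ring

lemma binet_const {x : ℝ} (hx : 0 < x) (n : ℕ) :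
    binetG (x + n) - binetF (x + n) = binetG x - binetF x := by
  induction n with
  | zero => simp
  | succ n ih =>
    have hxn : (0:ℝ) < x + n := by positivity
    have := binetG_rec hxn
    have harg : x + (n + 1 : ℕ) = (x + n) + 1 := by push_cast; ring
    rw [harg]
    linarith

lemma binet_tendsto_inv (x : ℝ) (c : ℝ) :
    Tendsto (fun n : ℕ => 1 / (x + n + c)) atTop (𝓝 0) := by
  have h : Tendsto (fun n : ℕ => x + n + c) atTop atTop := by
    apply tendsto_atTop_add_const_right
    exact tendsto_atTop_add_const_left _ _ tendsto_natCast_atTop_atTop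
  simpa [one_div, Pi.inv_def] using h.inv_tendsto_atTop

lemma binet_tendsto_inv2 (x : ℝ) : Tendsto (fun n : ℕ => 1 / (2 * (x + n))) atTop (𝓝 0) := by
  have h : Tendsto (fun n : ℕ => 2 * (x + n)) atTop atTop :=
    (tendsto_atTop_add_const_left _ x tendsto_natCast_atTop_atTop).const_mul_atTop two_pos
  have := h.inv_tendsto_atTop
  refine this.congr (fun n => ?_)
  simp [one_div]

lemma binetF_tendsto {x : ℝ} (hx : 0 < x) :
    Tendsto (fun n : ℕ => binetF (x + n)) atTop (𝓝 0) := by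
  refine squeeze_zero (fun n => binetF_nonneg (by positivity))
    (fun n => binetF_le (by positivity)) (binet_tendsto_inv2 x)

lemma binet_log_tendsto {x : ℝ} (hx : 0 < x) :
    Tendsto (fun n : ℕ => Real.log (x + n) - Real.log (x + n - 1)) atTop (𝓝 0) := by
  have hratio : Tendsto (fun n : ℕ => (x + n) / (x + n - 1)) atTop (𝓝 1) := by
    have h1 : Tendsto (fun n : ℕ => 1 + 1 / (x + n + (-1))) atTop (𝓝 (1 + 0)) :=
      tendsto_const_nhds.add (binet_tendsto_inv x (-1))
    rw [add_zero] at h1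
    refine h1.congr' ?_
    filter_upwards [eventually_ge_atTop 1] with n hn
    have hpos : (0:ℝ) < x + n - 1 := by
      have : (1:ℝ) ≤ (n:ℝ) := by exact_mod_cast hn
      linarith
    rw [show x + (n:ℝ) + (-1) = x + n - 1 from by ring, eq_div_iff hpos.ne', add_mul,
      one_mul, div_mul_cancel₀ _ hpos.ne']
    ring
  have hlog : Tendsto (fun n : ℕ => Real.log ((x + n) / (x + n - 1))) atTop (𝓝 0) := by
    have := (Real.continuousAt_log one_ne_zero).tendsto.comp hratio
    rwa [Real.log_one] at this
  refine hlog.congr' ?_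
  filter_upwards [eventually_ge_atTop 1] with n hn
  have h1 : (1:ℝ) ≤ (n:ℝ) := by exact_mod_cast hn
  have hpos : (0:ℝ) < x + n - 1 := by linarith
  rw [Real.log_div (by positivity) hpos.ne']

lemma binetG_tendsto {x : ℝ} (hx : 0 < x) :
    Tendsto (fun n : ℕ => binetG (x + n)) atTop (𝓝 0) := by
  refine tendsto_of_tendsto_of_tendsto_of_le_of_le'
    (g := fun n : ℕ => -(1 / (2 * (x + n)))) (h := fun n : ℕ => Real.log (x + n) - Real.log (x + n - 1))
    (by simpa using (binet_tendsto_inv2 x).neg) (binet_log_tendsto hx) ?_ ?_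
  · filter_upwards with n
    have hpos : (0:ℝ) < x + n := by positivity
    have := digamma_le_log hpos
    rw [binetG]
    linarith
  · filter_upwards [eventually_ge_atTop 1] with n hn
    have h1 : (1:ℝ) ≤ (n:ℝ) := by exact_mod_cast hn
    have hgt : (1:ℝ) < x + n := by linarith
    have := log_le_digamma hgt
    have hpos : (0:ℝ) < x + n := by positivity
    have hinv : 0 < 1 / (2 * (x + n)) := by positivity
    rw [binetG]
    linarith

lemma binetG_eq_binetF {x : ℝ} (hx : 0 < x) : binetG x = binetF x := by
  have hconst : Tendsto (fun n : ℕ => binetG (x + n) - binetF (x + n)) atTop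
      (𝓝 (binetG x - binetF x)) := by
    refine Tendsto.congr (fun n => (binet_const hx n).symm) tendsto_const_nhds
  have hzero : Tendsto (fun n : ℕ => binetG (x + n) - binetF (x + n)) atTop (𝓝 (0 - 0)) :=
    (binetG_tendsto hx).sub (binetF_tendsto hx)
  rw [sub_zero] at hzero
  have := tendsto_nhds_unique hconst hzero
  linarith [this]

end BinetAux

theorem binet_digamma_integral (x : ℝ) (hx : 0 < x) :
    Real.log x - 1 / (2 * x) - digamma x =
      ∫ t in Set.Ioi (0 : ℝ),
        Real.exp (-x * t) * (1 / 2 + 1 / (Real.exp t - 1) - 1 / t) := by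
  have := binetG_eq_binetF hx
  rw [binetG] at this
  rw [this, binetF]
  rfl
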